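/- Characterization of densities with vanishing Dirichlet form: let Λ = {−l,…,l}^d with l ≥ 1, p : Λ → [a,b], φ > 0, and ν^{Λ,p}_φ := ⊗_{x∈Λ} ν¹_{φ/p_x}. For f : ℕ^Λ → [0,∞), the Dirichlet form D(f) := Σ_{(x,y): x,y∈Λ, x∼y} (1/2)·∫ p_x·g(η(x))·(√(f(η^{x,y})) − √(f(η)))² dν^{Λ,p}_φ(η) vanishes, D(f) = 0, if and only if f is constant along all hyperplanes of a given number of particles, i.e., f(η) = f(ξ) whenever Σ_{x∈Λ} η(x) = Σ_{x∈Λ} ξ(x). -/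

import Mathlib

open scoped BigOperators
open MeasureTheory

/-- The "generalized factorial" `g(n)! = g(1)·g(2)···g(n)`, with `g(0)! = 1`. -/
noncomputable def gfact (g : ℕ → ℝ) (n : ℕ) : ℝ := ∏ i ∈ Finset.Icc 1 n, g i

/-- The partition function `Z(φ) = Σ_{n≥0} φⁿ/g(n)!`. -/
noncomputable def Zfun (g : ℕ → ℝ) (φ : ℝ) : ℝ := ∑' n : ℕ, φ ^ n / gfact g n

/-- The one-site marginal `ν¹_φ(n) = φⁿ/(Z(φ)·g(n)!)`. -/
noncomputable def nu1 (g : ℕ → ℝ) (φ : ℝ) (n : ℕ) : ℝ := φ ^ n / (Zfun g φ * gfact g n)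

/-- The one-site marginal `ν¹_φ` as a measure on `ℕ`. -/
noncomputable def nuM (g : ℕ → ℝ) (φ : ℝ) : Measure ℕ :=
  Measure.sum fun n => (ENNReal.ofReal (nu1 g φ n)) • Measure.dirac n

/-- Sites of the box `Λ = {−l,…,l}^d ⊂ ℤ^d`. -/
abbrev BoxSite (d l : ℕ) := Fin d → {z : ℤ // z ∈ Finset.Icc (-(l : ℤ)) (l : ℤ)}

/-- Nearest neighbors in the box: `x ∼ y` iff `|x − y| = 1`. -/
def nbrBox {d l : ℕ} (x y : BoxSite d l) : Prop :=
  (∑ i, |(x i : ℤ) - (y i : ℤ)|) = 1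

/-- The configuration `η^{x,y}` obtained from `η` after one particle jumps from `x` to `y`. -/
def move {T : Type*} [DecidableEq T] (η : T → ℕ) (x y : T) : T → ℕ :=
  Function.update (Function.update η x (η x - 1)) y (η y + 1)

set_option linter.unusedSectionVars false

section Aux
variable {T : Type*} [Fintype T] [DecidableEq T]

lemma move_apply_int (η : T → ℕ) (x y : T) (hxy : x ≠ y) (h1 : 1 ≤ η x) (z : T) :
    ((move η x y z : ℤ)) = (η z : ℤ) + (if z = y then 1 else 0) - (if z = x then 1 else 0) := by
  unfold move
  rcases eq_or_ne z y with rfl | hzy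
  · rw [Function.update_self]
    simp [Ne.symm hxy]
  · rw [Function.update_of_ne hzy]
    rcases eq_or_ne z x with rfl | hzx
    · rw [Function.update_self]
      have : (1:ℕ) ≤ η z := h1
      simp [hzy]
      omega
    · rw [Function.update_of_ne hzx]
      simp [hzy, hzx]

lemma sum_move_weight (η : T → ℕ) (x y : T) (hxy : x ≠ y) (h1 : 1 ≤ η x) (w : T → ℤ) :
    (∑ z, (move η x y z : ℤ) * w z) = (∑ z, (η z : ℤ) * w z) + w y - w x := by
  have hterm : ∀ z, (move η x y z : ℤ) * w z
      = (η z : ℤ) * w z + (if z = y then w z else 0) - (if z = x then w z else 0) := by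
    intro z
    rw [move_apply_int η x y hxy h1 z]
    split_ifs <;> ring
  calc (∑ z, (move η x y z : ℤ) * w z)
      = ∑ z, ((η z : ℤ) * w z + (if z = y then w z else 0) - (if z = x then w z else 0)) :=
        Finset.sum_congr rfl fun z _ => hterm z
    _ = (∑ z, (η z : ℤ) * w z) + w y - w x := by
        rw [Finset.sum_sub_distrib, Finset.sum_add_distrib,
          Finset.sum_ite_eq' Finset.univ y w, Finset.sum_ite_eq' Finset.univ x w]
        simp

lemma sum_move (η : T → ℕ) (x y : T) (hxy : x ≠ y) (h1 : 1 ≤ η x) :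
    (∑ z, move η x y z) = ∑ z, η z := by
  have h := sum_move_weight η x y hxy h1 (fun _ => 1)
  simp only [mul_one] at h
  exact_mod_cast (by linarith : (∑ z, (move η x y z : ℤ)) = ∑ z, (η z : ℤ))

lemma weight_move (η : T → ℕ) (x y : T) (hxy : x ≠ y) (h1 : 1 ≤ η x) (c : T → ℕ)
    (hc : c x = c y + 1) :
    (∑ z, move η x y z * c z) + 1 = ∑ z, η z * c z := by
  have h := sum_move_weight η x y hxy h1 (fun z => (c z : ℤ))
  have hc' : ((c x : ℤ)) = (c y : ℤ) + 1 := by exact_mod_cast hc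
  have : ((∑ z, move η x y z * c z : ℕ) : ℤ) + 1 = ((∑ z, η z * c z : ℕ) : ℤ) := by
    push_cast
    rw [h]
    linarith
  exact_mod_cast this

end Aux

section Box
variable {d l : ℕ}

/-- ℓ¹ norm of a site. -/
def csum (z : BoxSite d l) : ℕ := ∑ i, (z i : ℤ).natAbs

lemma exists_step (x : BoxSite d l) (hx : csum x ≠ 0) :
    ∃ y : BoxSite d l, nbrBox x y ∧ x ≠ y ∧ csum x = csum y + 1 := by
  classical
  obtain ⟨i, hi0⟩ : ∃ i, (x i : ℤ) ≠ 0 := by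
    by_contra h
    push_neg at h
    exact hx (Finset.sum_eq_zero fun i _ => by rw [h i]; rfl)
  have hv := Finset.mem_Icc.mp (x i).2
  set w : ℤ := if 0 < (x i : ℤ) then (x i : ℤ) - 1 else (x i : ℤ) + 1 with hw
  have hwmem : w ∈ Finset.Icc (-(l : ℤ)) (l : ℤ) := by
    rw [Finset.mem_Icc, hw]; split <;> omega
  set y : BoxSite d l := Function.update x i ⟨w, hwmem⟩ with hy
  have hdiff : (x i : ℤ) - w = 1 ∨ (x i : ℤ) - w = -1 := by
    rw [hw]; split <;> omega
  have hyi : ((y i : ℤ)) = w := by rw [hy, Function.update_self]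
  have hyj : ∀ j, j ≠ i → y j = x j := fun j hj => by rw [hy, Function.update_of_ne hj]
  have hnbr : nbrBox x y := by
    unfold nbrBox
    have : ∀ j, |(x j : ℤ) - (y j : ℤ)| = if j = i then 1 else 0 := by
      intro j
      rcases eq_or_ne j i with rfl | hj
      · rw [hyi, if_pos rfl]; rcases hdiff with h | h <;> rw [h] <;> simp
      · rw [hyj j hj, if_neg hj]; simp
    rw [Finset.sum_congr rfl fun j _ => this j, Finset.sum_ite_eq' Finset.univ i (fun _ => (1:ℤ))]
    simp
  have hne : x ≠ y := by
    intro h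
    have := congrArg (fun z : BoxSite d l => (z i : ℤ)) h
    simp only [hyi] at this
    omega
  have habs : w.natAbs + 1 = (x i : ℤ).natAbs := by
    rw [hw]; split <;> omega
  have hcs : csum x = csum y + 1 := by
    have hx' : csum x = (∑ j ∈ Finset.univ.erase i, ((x j : ℤ)).natAbs) + ((x i : ℤ)).natAbs :=
      (Finset.sum_erase_add _ _ (Finset.mem_univ i)).symm
    have hy' : csum y = (∑ j ∈ Finset.univ.erase i, ((x j : ℤ)).natAbs) + w.natAbs := by
      rw [csum, ← Finset.sum_erase_add _ _ (Finset.mem_univ i), hyi]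
      congr 1
      exact Finset.sum_congr rfl fun j hj => by rw [hyj j (Finset.ne_of_mem_erase hj)]
    omega
  exact ⟨y, hnbr, hne, hcs⟩

lemma level_const (f : (BoxSite d l → ℕ) → ℝ)
    (hmv : ∀ (x y : BoxSite d l) (η : BoxSite d l → ℕ),
      nbrBox x y → 1 ≤ η x → f (move η x y) = f η) :
    ∀ η ξ : BoxSite d l → ℕ, (∑ x, η x) = (∑ x, ξ x) → f η = f ξ := by
  classical
  have h0mem : (0 : ℤ) ∈ Finset.Icc (-(l : ℤ)) (l : ℤ) := by
    rw [Finset.mem_Icc]; omega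
  set o : BoxSite d l := fun _ => ⟨0, h0mem⟩ with ho
  set delta : ℕ → BoxSite d l → ℕ := fun N z => if z = o then N else 0 with hdelta
  have hco : ∀ z : BoxSite d l, csum z = 0 → z = o := by
    intro z hz
    funext i
    have := Finset.sum_eq_zero_iff.mp hz i (Finset.mem_univ i)
    exact Subtype.ext (by have h2 : ((z i : ℤ)) = 0 := by simpa [Int.natAbs_eq_zero] using this
                          exact h2.trans rfl)
  have key : ∀ n (η : BoxSite d l → ℕ), (∑ z, η z * csum z) = n →
      f η = f (delta (∑ z, η z)) := by
    intro n
    induction n using Nat.strong_induction_on with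
    | _ n IH =>
      intro η hn
      by_cases hW : (∑ z, η z * csum z) = 0
      · have hz0 : ∀ z, z ≠ o → η z = 0 := by
          intro z hzo
          have hterm := Finset.sum_eq_zero_iff.mp hW z (Finset.mem_univ z)
          rcases Nat.mul_eq_zero.mp hterm with h | h
          · exact h
          · exact absurd (hco z h) hzo
        have hηd : η = delta (∑ z, η z) := by
          funext z
          rcases eq_or_ne z o with rfl | hzo
          · simp only [hdelta, if_pos rfl]
            exact (Finset.sum_eq_single_of_mem o (Finset.mem_univ o)
              (fun w _ hw => hz0 w hw)).symm
          · simp only [hdelta, if_neg hzo]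
            exact hz0 z hzo
        conv_lhs => rw [hηd]
      · obtain ⟨x, hx⟩ : ∃ x, η x * csum x ≠ 0 := by
          by_contra h
          push_neg at h
          exact hW (Finset.sum_eq_zero fun z _ => h z)
        rw [Nat.mul_ne_zero_iff] at hx
        obtain ⟨y, hnbr, hxy, hcxy⟩ := exists_step x hx.2
        have h1 : 1 ≤ η x := Nat.one_le_iff_ne_zero.mpr hx.1
        have hmw := weight_move η x y hxy h1 csum hcxy
        have hsum := sum_move η x y hxy h1
        have hlt : (∑ z, move η x y z * csum z) < n := by omega
        calc f η = f (move η x y) := (hmv x y η hnbr h1).symm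
          _ = f (delta (∑ z, move η x y z)) := IH _ hlt _ rfl
          _ = f (delta (∑ z, η z)) := by rw [hsum]
  intro η ξ h
  rw [key _ η rfl, key _ ξ rfl, h]

end Box

section Meas
variable {g : ℕ → ℝ} {g₀ : ℝ}

lemma gfact_pos (hgpos : ∀ n, 1 ≤ n → 0 < g n) (n : ℕ) : 0 < gfact g n :=
  Finset.prod_pos fun i hi => hgpos i (Finset.mem_Icc.mp hi).1

lemma gfact_ge (hg₀ : 0 < g₀) (hlin : ∀ n : ℕ, g₀ * n ≤ g n) (n : ℕ) :
    g₀ ^ n * (n.factorial : ℝ) ≤ gfact g n := by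
  have h1 : (∏ i ∈ Finset.Icc 1 n, (g₀ * (i : ℝ))) ≤ ∏ i ∈ Finset.Icc 1 n, g i :=
    Finset.prod_le_prod (fun i hi => by positivity) (fun i hi => hlin i)
  calc g₀ ^ n * (n.factorial : ℝ) = ∏ i ∈ Finset.Icc 1 n, (g₀ * (i : ℝ)) := by
        rw [Finset.prod_mul_distrib, Finset.prod_const, Nat.card_Icc, Nat.add_sub_cancel]
        congr 1
        rw [← Nat.cast_prod, ← Finset.Ico_add_one_right_eq_Icc, Finset.prod_Ico_id_eq_factorial]
    _ ≤ gfact g n := h1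

lemma summable_Z (hg₀ : 0 < g₀) (hgpos : ∀ n, 1 ≤ n → 0 < g n)
    (hlin : ∀ n : ℕ, g₀ * n ≤ g n) {ψ : ℝ} (hψ : 0 ≤ ψ) :
    Summable (fun n => ψ ^ n / gfact g n) := by
  refine Summable.of_nonneg_of_le
    (fun n => div_nonneg (pow_nonneg hψ n) (gfact_pos hgpos n).le)
    (fun n => ?_) (Real.summable_pow_div_factorial (ψ / g₀))
  have hge := gfact_ge hg₀ hlin (g := g) n
  have hpos : (0:ℝ) < g₀ ^ n * n.factorial := by positivity
  rw [div_pow, div_div]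
  exact div_le_div_of_nonneg_left (pow_nonneg hψ n) hpos hge

lemma Zfun_pos (hg₀ : 0 < g₀) (hgpos : ∀ n, 1 ≤ n → 0 < g n)
    (hlin : ∀ n : ℕ, g₀ * n ≤ g n) {ψ : ℝ} (hψ : 0 ≤ ψ) : 0 < Zfun g ψ := by
  have hs := summable_Z hg₀ hgpos hlin hψ
  have := Summable.le_tsum hs 0 (fun j _ => div_nonneg (pow_nonneg hψ j) (gfact_pos hgpos j).le)
  have h1 : (1:ℝ) ≤ Zfun g ψ := by
    rw [Zfun]
    simpa [gfact] using this
  linarith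

lemma nu1_pos (hg₀ : 0 < g₀) (hgpos : ∀ n, 1 ≤ n → 0 < g n)
    (hlin : ∀ n : ℕ, g₀ * n ≤ g n) {ψ : ℝ} (hψ : 0 < ψ) (n : ℕ) : 0 < nu1 g ψ n :=
  div_pos (pow_pos hψ n) (mul_pos (Zfun_pos hg₀ hgpos hlin hψ.le) (gfact_pos hgpos n))

lemma nuM_singleton (g : ℕ → ℝ) (ψ : ℝ) (n : ℕ) :
    nuM g ψ {n} = ENNReal.ofReal (nu1 g ψ n) := by
  rw [nuM, Measure.sum_apply _ (measurableSet_singleton n)]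
  have : ∀ m : ℕ, (ENNReal.ofReal (nu1 g ψ m) • Measure.dirac m) {n}
      = if m = n then ENNReal.ofReal (nu1 g ψ n) else 0 := by
    intro m
    rw [Measure.smul_apply, smul_eq_mul, Measure.dirac_apply' _ (measurableSet_singleton n)]
    rcases eq_or_ne m n with rfl | hmn
    · simp
    · simp [Set.indicator_of_notMem, hmn]
  rw [tsum_congr this, tsum_eq_single n (fun m hm => by rw [if_neg hm])]
  simp

lemma nuM_univ_lt_top (hg₀ : 0 < g₀) (hgpos : ∀ n, 1 ≤ n → 0 < g n)
    (hlin : ∀ n : ℕ, g₀ * n ≤ g n) {ψ : ℝ} (hψ : 0 ≤ ψ) :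
    nuM g ψ Set.univ < ⊤ := by
  rw [nuM, Measure.sum_apply _ MeasurableSet.univ]
  have : (∑' n, (ENNReal.ofReal (nu1 g ψ n) • Measure.dirac n) Set.univ)
      = ∑' n, ENNReal.ofReal (nu1 g ψ n) := by
    apply tsum_congr; intro m; simp
  rw [this]
  have hnn : ∀ n, 0 ≤ nu1 g ψ n := fun n =>
    div_nonneg (pow_nonneg hψ n) (mul_nonneg
      (Zfun_pos hg₀ hgpos hlin hψ).le (gfact_pos hgpos n).le)
  have hs : Summable (nu1 g ψ) := by
    have := (summable_Z hg₀ hgpos hlin hψ (g := g)).div_const (Zfun g ψ)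
    refine this.congr fun n => ?_
    rw [nu1, div_div, mul_comm]
  rw [← ENNReal.ofReal_tsum_of_nonneg hnn hs]
  exact ENNReal.ofReal_lt_top

end Meas

open Classical in
/-- The Dirichlet form on the box,
`D(f) = Σ_{(x,y): x∼y} (1/2)·∫ p_x·g(η(x))·(√(f(η^{x,y})) − √(f(η)))² dν^{Λ,p}_φ(η)`,
with values in `[0,∞]`. -/
noncomputable def dirBox {d l : ℕ} (g : ℕ → ℝ) (p : BoxSite d l → ℝ) (φ : ℝ)
    (f : (BoxSite d l → ℕ) → ℝ) : ENNReal :=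
  ∑ x, ∑ y, if nbrBox x y then
    (1 / 2) * ∫⁻ η, ENNReal.ofReal
      (p x * g (η x) * (Real.sqrt (f (move η x y)) - Real.sqrt (f η)) ^ 2)
      ∂(Measure.pi fun z => nuM g (φ / p z))
    else 0

/-- Characterization of densities with vanishing Dirichlet form: `D(f) = 0` iff `f` is
constant along all hyperplanes of a given number of particles. -/
theorem vanishing_dirichlet_form_iff
    (g : ℕ → ℝ) (g₀ gstar : ℝ) (hg₀ : 0 < g₀) (hgs : g₀ ≤ gstar)
    (hgzero : g 0 = 0) (hgpos : ∀ n, 1 ≤ n → 0 < g n)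
    (hLip : ∀ n, |g (n + 1) - g n| ≤ gstar)
    (hlin : ∀ n, g₀ * n ≤ g n)
    (a b : ℝ) (ha : 0 < a) (hab : a < b)
    (d l : ℕ) (hl : 1 ≤ l)
    (p : BoxSite d l → ℝ) (hp : ∀ x, p x ∈ Set.Icc a b)
    (φ : ℝ) (hφ : 0 < φ)
    (f : (BoxSite d l → ℕ) → ℝ) (hf0 : ∀ η, 0 ≤ f η) :
    dirBox g p φ f = 0 ↔
      ∀ η ξ : BoxSite d l → ℕ, (∑ x, η x) = (∑ x, ξ x) → f η = f ξ := by
  classical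
  have hppos : ∀ x : BoxSite d l, 0 < p x := fun x => lt_of_lt_of_le ha (hp x).1
  have hψpos : ∀ z : BoxSite d l, 0 < φ / p z := fun z => div_pos hφ (hppos z)
  have hne : ∀ x y : BoxSite d l, nbrBox x y → x ≠ y := by
    intro x y hnbr h
    subst h
    simp [nbrBox] at hnbr
  constructor
  · -- D = 0 → level constant
    intro hD
    apply level_const
    intro x y η hnbr h1
    -- extract the (x,y) term
    rw [dirBox] at hD
    have hterm := Finset.sum_eq_zero_iff.mp
      (Finset.sum_eq_zero_iff.mp hD x (Finset.mem_univ x)) y (Finset.mem_univ y)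
    rw [if_pos hnbr] at hterm
    have hI : (∫⁻ ξ, ENNReal.ofReal
        (p x * g (ξ x) * (Real.sqrt (f (move ξ x y)) - Real.sqrt (f ξ)) ^ 2)
        ∂(Measure.pi fun z => nuM g (φ / p z))) = 0 := by
      rcases mul_eq_zero.mp hterm with h | h
      · exact absurd h (by norm_num)
      · exact h
    set μ := Measure.pi fun z : BoxSite d l => nuM g (φ / p z) with hμ
    -- the measure of the singleton {η} is positive
    have hμη : μ {η} ≠ 0 := by
      have hsingle : ({η} : Set (BoxSite d l → ℕ)) = Set.univ.pi fun z => {η z} :=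
        (Set.univ_pi_singleton η).symm
      haveI : ∀ z : BoxSite d l, SigmaFinite (nuM g (φ / p z)) := fun z => by
        have := nuM_univ_lt_top hg₀ hgpos hlin (hψpos z).le (g := g)
        haveI : IsFiniteMeasure (nuM g (φ / p z)) := ⟨this⟩
        infer_instance
      rw [hμ, hsingle, Measure.pi_pi]
      rw [Finset.prod_ne_zero_iff]
      intro z _
      rw [nuM_singleton]
      simp only [ne_eq, ENNReal.ofReal_eq_zero, not_le]
      exact nu1_pos hg₀ hgpos hlin (hψpos z) (η z)
    -- singleton lower bound for the integral
    have hmeasη : MeasurableSet ({η} : Set (BoxSite d l → ℕ)) := measurableSet_singleton η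
    set V : (BoxSite d l → ℕ) → ℝ := fun ξ =>
      p x * g (ξ x) * (Real.sqrt (f (move ξ x y)) - Real.sqrt (f ξ)) ^ 2 with hV
    have hle : ENNReal.ofReal (V η) * μ {η} ≤ ∫⁻ ξ, ENNReal.ofReal (V ξ) ∂μ := by
      calc ENNReal.ofReal (V η) * μ {η}
          = ∫⁻ ξ, Set.indicator {η} (fun _ => ENNReal.ofReal (V η)) ξ ∂μ :=
            (lintegral_indicator_const hmeasη _).symm
        _ ≤ ∫⁻ ξ, ENNReal.ofReal (V ξ) ∂μ := by
            apply lintegral_mono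
            intro ξ
            rw [Set.indicator_apply]
            split_ifs with h
            · rw [Set.mem_singleton_iff] at h
              rw [h]
            · exact zero_le
    rw [hI] at hle
    have hV0 : ENNReal.ofReal (V η) = 0 := by
      rcases mul_eq_zero.mp (le_antisymm hle zero_le) with h | h
      · exact h
      · exact absurd h hμη
    rw [ENNReal.ofReal_eq_zero] at hV0
    have hpg : 0 < p x * g (η x) := mul_pos (hppos x) (hgpos (η x) h1)
    have hsq : (Real.sqrt (f (move η x y)) - Real.sqrt (f η)) ^ 2 = 0 := by
      by_contra hne0
      have hpos : 0 < (Real.sqrt (f (move η x y)) - Real.sqrt (f η)) ^ 2 :=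
        lt_of_le_of_ne (sq_nonneg _) (Ne.symm hne0)
      have hgt : (0:ℝ) < V η := mul_pos hpg hpos
      exact absurd hV0 (not_le.mpr hgt)
    have hrt : Real.sqrt (f (move η x y)) = Real.sqrt (f η) :=
      sub_eq_zero.mp (pow_eq_zero_iff two_ne_zero |>.mp hsq)
    calc f (move η x y) = Real.sqrt (f (move η x y)) ^ 2 := (Real.sq_sqrt (hf0 _)).symm
      _ = Real.sqrt (f η) ^ 2 := by rw [hrt]
      _ = f η := Real.sq_sqrt (hf0 _)
  · -- level constant → D = 0
    intro hconst
    rw [dirBox]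
    apply Finset.sum_eq_zero
    intro x _
    apply Finset.sum_eq_zero
    intro y _
    split_ifs with hnbr
    · have hzero : ∀ η : BoxSite d l → ℕ, ENNReal.ofReal
          (p x * g (η x) * (Real.sqrt (f (move η x y)) - Real.sqrt (f η)) ^ 2) = 0 := by
        intro η
        rcases Nat.eq_zero_or_pos (η x) with h0 | h1
        · rw [h0, hgzero, mul_zero, zero_mul, ENNReal.ofReal_zero]
        · have hfm : f (move η x y) = f η :=
            hconst _ _ (sum_move η x y (hne x y hnbr) h1)
          rw [hfm, sub_self]
          norm_num
      simp only [hzero, lintegral_const, zero_mul, mul_zero]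
    · rfl
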